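/- A Pierce sequence σ ∈ Σ fails to be realizable (i.e., is not the digit sequence of any x ∈ [0,1]) if and only if σ ∈ Σ_n for some n ≥ 2 and σ_{n-1} + 1 = σ_n. -/

import Mathlib

open scoped BigOperators

/-- Reciprocal of an extended natural number as a real, with `1/∞ = 0`. -/
noncomputable def pinv (a : ℕ∞) : ℝ := ((a.toNat : ℕ) : ℝ)⁻¹

/-- First Pierce digit: `⌊1/x⌋` for `x ≠ 0`, and `∞` for `x = 0`. -/
noncomputable def pd1 (x : ℝ) : ℕ∞ := if x = 0 then ⊤ else (⌊x⁻¹⌋₊ : ℕ∞)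

/-- Pierce map `T(x) = 1 - ⌊1/x⌋ x` for `x ≠ 0`, `T(0) = 0`. -/
noncomputable def pT (x : ℝ) : ℝ := if x = 0 then 0 else 1 - (⌊x⁻¹⌋₊ : ℝ) * x

/-- `n`-th Pierce digit `d_n(x) = d_1(T^{n-1} x)` (for `n ≥ 1`). -/
noncomputable def pdig (n : ℕ) (x : ℝ) : ℕ∞ := pd1 (pT^[n-1] x)

/-- `1/(d_1(x) ⋯ d_n(x))`, with the convention that a factor `∞` makes it `0`. -/
noncomputable def pprodR (n : ℕ) (x : ℝ) : ℝ := ∏ k ∈ Finset.Icc 1 n, pinv (pdig k x)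

/-- `n`-th partial sum `s_n(x)` of the Pierce expansion of `x`. -/
noncomputable def psum (n : ℕ) (x : ℝ) : ℝ :=
  ∑ k ∈ Finset.Icc 1 n, (-1 : ℝ) ^ (k + 1) * pprodR k x

/-- The error-sum function of Pierce expansions `E(x) = Σ_{n≥1} (x - s_n(x))`. -/
noncomputable def pE (x : ℝ) : ℝ := ∑' n : ℕ, (x - psum (n + 1) x)

/-- A Pierce sequence (0-indexed: `σ k` is the paper's `σ_{k+1}`): terms are positive, strictly
increasing while finite, and once a term is `∞` all later terms are `∞`. -/
def IsPierce (σ : ℕ → ℕ∞) : Prop :=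
  1 ≤ σ 0 ∧ ∀ n, σ n < σ (n + 1) ∨ (σ n = ⊤ ∧ σ (n + 1) = ⊤)

/-- `n`-th partial sum `φ_n(σ)`. -/
noncomputable def pphiN (n : ℕ) (σ : ℕ → ℕ∞) : ℝ :=
  ∑ k ∈ Finset.range n, (-1 : ℝ) ^ k * ∏ i ∈ Finset.range (k + 1), pinv (σ i)

/-- `φ(σ) = Σ_{k≥1} (-1)^{k+1}/(σ_1 ⋯ σ_k)`. -/
noncomputable def pphi (σ : ℕ → ℕ∞) : ℝ :=
  ∑' k : ℕ, (-1 : ℝ) ^ k * ∏ i ∈ Finset.range (k + 1), pinv (σ i)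

/-- The error-sum function of Pierce sequences `E*(σ) = Σ_{n≥1} (φ(σ) - φ_n(σ))`. -/
noncomputable def pEstar (σ : ℕ → ℕ∞) : ℝ := ∑' n : ℕ, (pphi σ - pphiN (n + 1) σ)

/-- The series formula `Σ_{n≥1} (-1)^n n/(σ_1 ⋯ σ_{n+1})` for the error-sum of a sequence. -/
noncomputable def pEstarSeries (σ : ℕ → ℕ∞) : ℝ :=
  ∑' n : ℕ, (-1 : ℝ) ^ (n + 1) * (n + 1) * ∏ i ∈ Finset.range (n + 2), pinv (σ i)

/-- The metric `ρ(x,y) = 1/x + 1/y` for `x ≠ y` (with `1/∞ = 0`), `ρ(x,x) = 0`. -/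
noncomputable def prho (x y : ℕ∞) : ℝ := if x = y then 0 else pinv x + pinv y

/-- The metric `ρ^ℕ(σ,τ) = Σ_{n≥1} ρ(σ_n, τ_n)/n!` on sequences. -/
noncomputable def prhoN (σ τ : ℕ → ℕ∞) : ℝ :=
  ∑' n : ℕ, prho (σ n) (τ n) / ((n + 1).factorial : ℝ)

/-- A Pierce sequence is realizable if it is the digit sequence of some `x ∈ [0,1]`. -/
def Realizable (σ : ℕ → ℕ∞) : Prop :=
  ∃ x ∈ Set.Icc (0 : ℝ) 1, ∀ k : ℕ, pdig (k + 1) x = σ k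

section Aux

lemma my_pinv_nonneg (a : ℕ∞) : 0 ≤ pinv a := by
  unfold pinv; positivity

lemma my_pinv_top : pinv ⊤ = 0 := by simp [pinv]

lemma my_pinv_coe (n : ℕ) : pinv n = (n : ℝ)⁻¹ := by simp [pinv]

lemma my_pinv_le_one (a : ℕ∞) : pinv a ≤ 1 := by
  unfold pinv
  rcases Nat.eq_zero_or_pos a.toNat with h | h
  · simp [h]
  · rw [inv_le_one_iff₀]; right; exact_mod_cast h

/-- once `⊤`, always `⊤` -/
lemma my_top_mono {σ : ℕ → ℕ∞} (hP : IsPierce σ) {m n : ℕ} (h : σ m = ⊤) (hmn : m ≤ n) :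
    σ n = ⊤ := by
  induction n with
  | zero =>
    have hm : m = 0 := Nat.le_zero.mp hmn
    rwa [hm] at h
  | succ n ih =>
    rcases Nat.lt_or_ge m (n+1) with h1 | h1
    · have hn : σ n = ⊤ := ih (by omega)
      rcases hP.2 n with h2 | h2
      · rw [hn] at h2; exact absurd h2 (by simp)
      · exact h2.2
    · have : m = n + 1 := by omega
      rwa [this] at h

lemma my_one_le {σ : ℕ → ℕ∞} (hP : IsPierce σ) (n : ℕ) : 1 ≤ σ n := by
  induction n with
  | zero => exact hP.1
  | succ n ih =>
    rcases hP.2 n with h | h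
    · exact le_of_lt (lt_of_le_of_lt ih h)
    · rw [h.2]; exact le_top

lemma my_ge {σ : ℕ → ℕ∞} (hP : IsPierce σ) (n : ℕ) : (n : ℕ∞) + 1 ≤ σ n := by
  induction n with
  | zero => simpa using hP.1
  | succ n ih =>
    rcases hP.2 n with h | h
    · have h2 : (n : ℕ∞) + 1 < σ (n + 1) := lt_of_le_of_lt ih h
      have h2' : ((n + 1 : ℕ) : ℕ∞) < σ (n + 1) := by push_cast; exact h2
      exact (ENat.add_one_le_iff (ENat.coe_ne_top _)).2 h2'
    · rw [h.2]; exact le_top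

lemma my_shift_pierce {σ : ℕ → ℕ∞} (hP : IsPierce σ) : IsPierce (fun k => σ (k + 1)) := by
  refine ⟨my_one_le hP 1, fun n => hP.2 (n + 1)⟩

/-- the terms of `pphi` -/
noncomputable def pf (σ : ℕ → ℕ∞) (k : ℕ) : ℝ :=
  (-1 : ℝ) ^ k * ∏ i ∈ Finset.range (k + 1), pinv (σ i)

lemma my_pphi_eq (σ : ℕ → ℕ∞) : pphi σ = ∑' k, pf σ k := rfl

lemma my_prod_nonneg (σ : ℕ → ℕ∞) (s : Finset ℕ) : 0 ≤ ∏ i ∈ s, pinv (σ i) :=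
  Finset.prod_nonneg fun i _ => my_pinv_nonneg _

lemma my_pinv_le_inv {a : ℕ∞} {n : ℕ} (h : ((n : ℕ∞) + 1) ≤ a) : pinv a ≤ ((n : ℝ) + 1)⁻¹ := by
  rcases eq_or_ne a ⊤ with rfl | ha
  · rw [my_pinv_top]; positivity
  · lift a to ℕ using ha
    rw [my_pinv_coe]
    have hn : n + 1 ≤ a := by exact_mod_cast h
    apply inv_anti₀ (by positivity)
    exact_mod_cast hn

lemma my_prod_le_factorial {σ : ℕ → ℕ∞} (hP : IsPierce σ) (k : ℕ) :
    ∏ i ∈ Finset.range (k + 1), pinv (σ i) ≤ ((k + 1).factorial : ℝ)⁻¹ := by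
  have hfac : ((k + 1).factorial : ℝ) = ∏ i ∈ Finset.range (k + 1), ((i : ℝ) + 1) := by
    induction k with
    | zero => simp
    | succ k ih => rw [Finset.prod_range_succ, ← ih, Nat.factorial_succ]; push_cast; ring
  rw [hfac, ← Finset.prod_inv_distrib]
  apply Finset.prod_le_prod (fun i _ => my_pinv_nonneg _)
  intro i _
  exact my_pinv_le_inv (my_ge hP i)

lemma my_summable_pf {σ : ℕ → ℕ∞} (hP : IsPierce σ) : Summable (pf σ) := by
  apply Summable.of_abs
  have hfact : Summable (fun k : ℕ => ((k + 1).factorial : ℝ)⁻¹) := by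
    have h1 := Real.summable_pow_div_factorial 1
    simp only [one_pow, one_div] at h1
    exact (summable_nat_add_iff 1).2 h1
  apply Summable.of_nonneg_of_le (fun k => abs_nonneg _) _ hfact
  intro k
  rw [pf, abs_mul, abs_pow, abs_neg, abs_one, one_pow, one_mul,
    abs_of_nonneg (my_prod_nonneg σ _)]
  exact my_prod_le_factorial hP k

/-- generic alternating series bounds -/
lemma my_alt_nonneg (p : ℕ → ℝ) (h0 : ∀ k, 0 ≤ p k) (h1 : ∀ k, p (k + 1) ≤ p k)
    (hs : Summable fun k => (-1 : ℝ) ^ k * p k) : 0 ≤ ∑' k, (-1 : ℝ) ^ k * p k := by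
  have hinj1 : Function.Injective (fun k : ℕ => 2 * k) := by
    intro a b h
    simp only at h
    omega
  have hinj2 : Function.Injective (fun k : ℕ => 2 * k + 1) := by
    intro a b h
    simp only at h
    omega
  have he0 : Summable fun k : ℕ => (-1 : ℝ) ^ (2 * k) * p (2 * k) := by
    have h := hs.comp_injective hinj1
    simpa [Function.comp_def] using h
  have ho0 : Summable fun k : ℕ => (-1 : ℝ) ^ (2 * k + 1) * p (2 * k + 1) := by
    have h := hs.comp_injective hinj2
    simpa [Function.comp_def] using h
  have key : (∑' k, (-1 : ℝ) ^ (2 * k) * p (2 * k)) +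
      (∑' k, (-1 : ℝ) ^ (2 * k + 1) * p (2 * k + 1)) = ∑' k, (-1 : ℝ) ^ k * p k :=
    tsum_even_add_odd (f := fun k => (-1 : ℝ) ^ k * p k) he0 ho0
  have he : Summable fun k : ℕ => p (2 * k) := he0.congr (fun k => by simp [pow_mul])
  have ho : Summable fun k : ℕ => p (2 * k + 1) :=
    ho0.neg.congr (fun k => by simp [pow_succ, pow_mul])
  have e1 : (∑' k, (-1 : ℝ) ^ (2 * k) * p (2 * k)) = ∑' k, p (2 * k) :=
    tsum_congr (fun k => by simp [pow_mul])
  have e2 : (∑' k, (-1 : ℝ) ^ (2 * k + 1) * p (2 * k + 1)) = -∑' k, p (2 * k + 1) := by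
    rw [← tsum_neg]
    exact tsum_congr (fun k => by simp [pow_succ, pow_mul])
  have hle : (∑' k, p (2 * k + 1)) ≤ ∑' k, p (2 * k) :=
    Summable.tsum_le_tsum (fun k => h1 (2 * k)) ho he
  rw [← key, e1, e2]
  linarith

lemma my_alt_le (p : ℕ → ℝ) (h0 : ∀ k, 0 ≤ p k) (h1 : ∀ k, p (k + 1) ≤ p k)
    (hs : Summable fun k => (-1 : ℝ) ^ k * p k) : ∑' k, (-1 : ℝ) ^ k * p k ≤ p 0 := by
  have key : (∑' k, (-1 : ℝ) ^ k * p k) =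
      (-1 : ℝ) ^ 0 * p 0 + ∑' k, (-1 : ℝ) ^ (k + 1) * p (k + 1) := Summable.tsum_eq_zero_add hs
  have hs0 : Summable (fun k => (-1 : ℝ) ^ (k + 1) * p (k + 1)) := (summable_nat_add_iff 1).2 hs
  have hs1 : Summable (fun k => (-1 : ℝ) ^ k * p (k + 1)) :=
    hs0.neg.congr (fun k => by ring)
  have e3 : (∑' k, (-1 : ℝ) ^ (k + 1) * p (k + 1)) = -∑' k, (-1 : ℝ) ^ k * p (k + 1) := by
    rw [← tsum_neg]
    exact tsum_congr (fun k => by ring)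
  have key2 : 0 ≤ ∑' k, (-1 : ℝ) ^ k * p (k + 1) :=
    my_alt_nonneg (fun k => p (k + 1)) (fun k => h0 _) (fun k => h1 _) hs1
  rw [key, e3]
  simp only [pow_zero, one_mul]
  linarith

lemma my_pp_nonneg (σ : ℕ → ℕ∞) (k : ℕ) : 0 ≤ ∏ i ∈ Finset.range (k + 1), pinv (σ i) :=
  my_prod_nonneg σ _

lemma my_pp_anti (σ : ℕ → ℕ∞) (k : ℕ) :
    ∏ i ∈ Finset.range (k + 1 + 1), pinv (σ i) ≤ ∏ i ∈ Finset.range (k + 1), pinv (σ i) := by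
  rw [Finset.prod_range_succ]
  exact mul_le_of_le_one_right (my_pp_nonneg σ k) (my_pinv_le_one _)

lemma my_pphi_nonneg {σ : ℕ → ℕ∞} (hP : IsPierce σ) : 0 ≤ pphi σ :=
  my_alt_nonneg (fun k => ∏ i ∈ Finset.range (k + 1), pinv (σ i)) (my_pp_nonneg σ)
    (my_pp_anti σ) (my_summable_pf hP)

lemma my_pphi_le {σ : ℕ → ℕ∞} (hP : IsPierce σ) : pphi σ ≤ pinv (σ 0) := by
  have h := my_alt_le (fun k => ∏ i ∈ Finset.range (k + 1), pinv (σ i)) (my_pp_nonneg σ)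
    (my_pp_anti σ) (my_summable_pf hP)
  simpa [pphi] using h

lemma my_pphi_top {σ : ℕ → ℕ∞} (h : σ 0 = ⊤) : pphi σ = 0 := by
  have h1 : ∀ k : ℕ, (-1 : ℝ) ^ k * ∏ i ∈ Finset.range (k + 1), pinv (σ i) = 0 := by
    intro k
    have : ∏ i ∈ Finset.range (k + 1), pinv (σ i) = 0 :=
      Finset.prod_eq_zero (Finset.mem_range.mpr (Nat.succ_pos k)) (by rw [h, my_pinv_top])
    rw [this, mul_zero]
  calc pphi σ = ∑' k : ℕ, (0 : ℝ) := tsum_congr h1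
    _ = 0 := tsum_zero

lemma my_pphi_rec {σ : ℕ → ℕ∞} (hP : IsPierce σ) :
    pphi σ = pinv (σ 0) * (1 - pphi (fun k => σ (k + 1))) := by
  have hterm : ∀ k : ℕ, (-1 : ℝ) ^ k * ∏ i ∈ Finset.range (k + 1), pinv (σ i) =
      pinv (σ 0) * ((-1 : ℝ) ^ k * ∏ i ∈ Finset.range k, pinv (σ (i + 1))) := by
    intro k
    rw [Finset.prod_range_succ']
    ring
  have h1 : pphi σ =
      ∑' k : ℕ, pinv (σ 0) * ((-1 : ℝ) ^ k * ∏ i ∈ Finset.range k, pinv (σ (i + 1))) :=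
    tsum_congr hterm
  rw [h1, tsum_mul_left]
  congr 1
  -- summability of the shifted pieces
  have hsh : Summable (pf fun k => σ (k + 1)) := my_summable_pf (my_shift_pierce hP)
  have hs1 : Summable (fun k : ℕ => (-1 : ℝ) ^ (k + 1) * ∏ i ∈ Finset.range (k + 1),
      pinv (σ (i + 1))) := hsh.neg.congr (fun k => by rw [pf]; ring)
  have hG : Summable (fun k : ℕ => (-1 : ℝ) ^ k * ∏ i ∈ Finset.range k, pinv (σ (i + 1))) :=
    (summable_nat_add_iff 1).1 hs1
  have key : (∑' k : ℕ, (-1 : ℝ) ^ k * ∏ i ∈ Finset.range k, pinv (σ (i + 1))) =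
      (-1 : ℝ) ^ 0 * (∏ i ∈ Finset.range 0, pinv (σ (i + 1))) +
      ∑' k : ℕ, (-1 : ℝ) ^ (k + 1) * ∏ i ∈ Finset.range (k + 1), pinv (σ (i + 1)) :=
    Summable.tsum_eq_zero_add hG
  rw [key]
  have e : (∑' k : ℕ, (-1 : ℝ) ^ (k + 1) * ∏ i ∈ Finset.range (k + 1), pinv (σ (i + 1))) =
      -pphi (fun k => σ (k + 1)) := by
    rw [pphi, ← tsum_neg]
    exact tsum_congr (fun k => by ring)
  rw [e]
  ring

lemma my_pphi_pos {σ : ℕ → ℕ∞} (hP : IsPierce σ) (h0 : σ 0 ≠ ⊤) : 0 < pphi σ := by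
  rw [my_pphi_rec hP]
  have hsh := my_shift_pierce hP
  have h1 : pphi (fun k => σ (k + 1)) ≤ pinv (σ 1) := my_pphi_le hsh
  have h2 : pinv (σ 1) ≤ (((1 : ℕ) : ℝ) + 1)⁻¹ := my_pinv_le_inv (my_ge hP 1)
  have h3 : 0 < pinv (σ 0) := by
    obtain ⟨a, ha'⟩ := WithTop.ne_top_iff_exists.mp h0
    have ha : σ 0 = (a : ℕ∞) := ha'.symm
    have ha1 : 1 ≤ a := by
      have := hP.1
      rw [ha] at this
      exact_mod_cast this
    rw [ha, my_pinv_coe]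
    have : (0 : ℝ) < a := by exact_mod_cast ha1
    positivity
  apply mul_pos h3
  norm_num at h2
  linarith

lemma my_pphi_gt {σ : ℕ → ℕ∞} (hP : IsPierce σ) {a : ℕ} (h0 : σ 0 = (a : ℕ∞)) (ha : 1 ≤ a)
    (hnb : ¬(σ 1 = σ 0 + 1 ∧ σ 2 = ⊤)) : ((a : ℝ) + 1)⁻¹ < pphi σ := by
  set A := (a : ℝ) with hA
  have hA1 : (1 : ℝ) ≤ A := by rw [hA]; exact_mod_cast ha
  have hApos : (0 : ℝ) < A := by linarith
  have hsh := my_shift_pierce hP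
  set E := pphi (fun k => σ (k + 1)) with hE
  have hE0 : 0 ≤ E := my_pphi_nonneg hsh
  have hElt : E < (A + 1)⁻¹ := by
    rcases eq_or_ne (σ 1) ⊤ with h1 | h1
    · have : E = 0 := my_pphi_top h1
      rw [this]; positivity
    · obtain ⟨b, hb'⟩ := WithTop.ne_top_iff_exists.mp h1
      have hb : σ 1 = (b : ℕ∞) := hb'.symm
      have hab : a < b := by
        rcases hP.2 0 with h | h
        · rw [h0, hb] at h; exact_mod_cast h
        · exact absurd h.1 (by rw [h0]; simp)
      rcases Nat.lt_or_ge b (a + 2) with hb2 | hb2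
      · -- b = a + 1
        have hb1 : b = a + 1 := by omega
        have hσ2 : σ 2 ≠ ⊤ := by
          intro h2
          exact hnb ⟨by rw [hb, h0, hb1]; push_cast; ring, h2⟩
        have hF : 0 < pphi (fun k => σ (k + 1 + 1)) := my_pphi_pos (my_shift_pierce hsh) hσ2
        have hrec : E = pinv (σ 1) * (1 - pphi (fun k => σ (k + 1 + 1))) := my_pphi_rec hsh
        rw [hrec, hb, hb1, my_pinv_coe]
        have hcast : ((a + 1 : ℕ) : ℝ) = A + 1 := by push_cast; ring
        rw [hcast]
        have hpos : (0 : ℝ) < (A + 1)⁻¹ := by positivity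
        nlinarith
      · -- b ≥ a + 2
        have h1 : E ≤ pinv (σ 1) := my_pphi_le hsh
        have h2 : pinv (σ 1) ≤ (((a + 1 : ℕ) : ℝ) + 1)⁻¹ := by
          apply my_pinv_le_inv
          rw [hb]
          exact_mod_cast hb2
        have h3 : (((a + 1 : ℕ) : ℝ) + 1)⁻¹ < (A + 1)⁻¹ := by
          apply inv_strictAnti₀ (by positivity)
          rw [hA]; push_cast; linarith
        linarith
  have hrec : pphi σ = pinv (σ 0) * (1 - E) := my_pphi_rec hP
  rw [hrec, h0, my_pinv_coe, ← hA]
  have hkey : (A + 1) * E < 1 := by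
    have := mul_lt_mul_of_pos_left hElt (show (0:ℝ) < A + 1 by linarith)
    rwa [mul_inv_cancel₀ (by linarith : A + 1 ≠ 0)] at this
  rw [show A⁻¹ * (1 - E) = (1 - E) / A from (div_eq_inv_mul _ _).symm, lt_div_iff₀ hApos]
  have h4 : (A + 1)⁻¹ * A = 1 - (A + 1)⁻¹ := by
    field_simp
    ring
  rw [h4]
  have h5 : (A + 1)⁻¹ * (A + 1) = 1 := inv_mul_cancel₀ (by linarith)
  nlinarith

lemma my_floor_aux {a : ℕ} (ha : 1 ≤ a) {x : ℝ} (hgt : ((a : ℝ) + 1)⁻¹ < x)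
    (hle : x ≤ (a : ℝ)⁻¹) : 0 < x ∧ ⌊x⁻¹⌋₊ = a := by
  have ha' : (0 : ℝ) < a := by exact_mod_cast ha
  have hx : 0 < x := lt_trans (by positivity) hgt
  refine ⟨hx, ?_⟩
  rw [Nat.floor_eq_iff (by positivity)]
  constructor
  · have h := inv_anti₀ hx hle
    rwa [inv_inv] at h
  · have h := inv_strictAnti₀ (by positivity : (0:ℝ) < ((a:ℝ)+1)⁻¹) hgt
    rwa [inv_inv] at h

lemma my_inv_floor {a : ℕ} (ha : 1 ≤ a) {y : ℝ} (hf : ⌊y⁻¹⌋₊ = a) :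
    0 < y ∧ ((a : ℝ) + 1)⁻¹ < y ∧ y ≤ (a : ℝ)⁻¹ := by
  have hypos : 0 < y⁻¹ := by
    by_contra hc
    push_neg at hc
    rw [Nat.floor_of_nonpos hc] at hf
    omega
  have hy0 : 0 < y := inv_pos.mp hypos
  have h := (Nat.floor_eq_iff (le_of_lt hypos)).mp hf
  refine ⟨hy0, ?_, ?_⟩
  · have h2 := inv_strictAnti₀ hypos h.2
    rwa [inv_inv] at h2
  · have ha' : (0 : ℝ) < a := by exact_mod_cast ha
    have h2 := inv_anti₀ ha' h.1
    rwa [inv_inv] at h2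

/-- The bad (non-realizable) condition. -/
def my_Bad (σ : ℕ → ℕ∞) : Prop :=
  ∃ n : ℕ, 2 ≤ n ∧ (∀ k < n, σ k ≠ ⊤) ∧ (∀ k, n ≤ k → σ k = ⊤) ∧
    σ (n - 2) + 1 = σ (n - 1)

lemma my_bad_shift {σ : ℕ → ℕ∞} (hP : IsPierce σ) (h : my_Bad (fun k => σ (k + 1))) :
    my_Bad σ := by
  obtain ⟨n, hn2, hfin, htop, hcons⟩ := h
  refine ⟨n + 1, by omega, ?_, ?_, ?_⟩
  · intro k hk
    match k with
    | 0 =>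
      intro h0
      exact hfin 0 (by omega) (my_top_mono hP h0 (by omega))
    | (j + 1) => exact hfin j (by omega)
  · intro k hk
    match k with
    | (j + 1) => exact htop j (by omega)
  · have e1 : n + 1 - 2 = (n - 2) + 1 := by omega
    have e2 : n + 1 - 1 = (n - 1) + 1 := by omega
    rw [e1, e2]
    exact hcons

lemma my_good_cons {σ : ℕ → ℕ∞} (hP : IsPierce σ) (hG : ¬ my_Bad σ) (h0 : σ 0 ≠ ⊤) :
    ¬(σ 1 = σ 0 + 1 ∧ σ 2 = ⊤) := by
  rintro ⟨h1, h2⟩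
  apply hG
  refine ⟨2, le_refl 2, ?_, ?_, ?_⟩
  · intro k hk
    interval_cases k
    · exact h0
    · rw [h1]
      exact WithTop.add_ne_top.mpr ⟨h0, WithTop.one_ne_top⟩
  · intro k hk
    exact my_top_mono hP h2 hk
  · simpa using h1.symm

/-- key step: value, floor and Pierce-map action on `pphi`. -/
lemma my_step {σ : ℕ → ℕ∞} (hP : IsPierce σ) (hG : ¬ my_Bad σ) {a : ℕ}
    (h0 : σ 0 = (a : ℕ∞)) :
    0 < pphi σ ∧ ⌊(pphi σ)⁻¹⌋₊ = a ∧ pT (pphi σ) = pphi (fun j => σ (j + 1)) := by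
  have ha : 1 ≤ a := by
    have := hP.1
    rw [h0] at this
    exact_mod_cast this
  have hgt : ((a : ℝ) + 1)⁻¹ < pphi σ :=
    my_pphi_gt hP h0 ha (my_good_cons hP hG (by rw [h0]; exact ENat.coe_ne_top a))
  have hle : pphi σ ≤ (a : ℝ)⁻¹ := by
    have := my_pphi_le hP
    rwa [h0, my_pinv_coe] at this
  obtain ⟨hpos, hfl⟩ := my_floor_aux ha hgt hle
  refine ⟨hpos, hfl, ?_⟩
  rw [pT, if_neg (ne_of_gt hpos), hfl]
  have hrec : pphi σ = pinv (σ 0) * (1 - pphi (fun k => σ (k + 1))) := my_pphi_rec hP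
  rw [hrec, h0, my_pinv_coe]
  have hane : (a : ℝ) ≠ 0 := by positivity
  field_simp
  ring

lemma my_key : ∀ (k : ℕ) (σ : ℕ → ℕ∞), IsPierce σ → ¬ my_Bad σ →
    pdig (k + 1) (pphi σ) = σ k := by
  intro k
  induction k with
  | zero =>
    intro σ hP hG
    show pd1 (pT^[0] (pphi σ)) = σ 0
    rw [Function.iterate_zero_apply]
    rcases eq_or_ne (σ 0) ⊤ with h0 | h0
    · rw [my_pphi_top h0, h0]
      simp [pd1]
    · obtain ⟨a, ha'⟩ := WithTop.ne_top_iff_exists.mp h0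
      have ha : σ 0 = (a : ℕ∞) := ha'.symm
      obtain ⟨hpos, hfl, -⟩ := my_step hP hG ha
      rw [pd1, if_neg (ne_of_gt hpos), hfl, ha]
  | succ k ih =>
    intro σ hP hG
    show pd1 (pT^[k + 1] (pphi σ)) = σ (k + 1)
    have hstep : pT (pphi σ) = pphi (fun j => σ (j + 1)) := by
      rcases eq_or_ne (σ 0) ⊤ with h0 | h0
      · rw [my_pphi_top h0]
        have h1 : (fun j => σ (j + 1)) 0 = ⊤ := my_top_mono hP h0 (by omega)
        rw [my_pphi_top h1, pT]
        simp
      · obtain ⟨a, ha'⟩ := WithTop.ne_top_iff_exists.mp h0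
        exact (my_step hP hG ha'.symm).2.2
    rw [Function.iterate_succ_apply, hstep]
    exact ih _ (my_shift_pierce hP) (fun hb => hG (my_bad_shift hP hb))

lemma my_good_realizable {σ : ℕ → ℕ∞} (hP : IsPierce σ) (hG : ¬ my_Bad σ) : Realizable σ := by
  refine ⟨pphi σ, ⟨my_pphi_nonneg hP, le_trans (my_pphi_le hP) (my_pinv_le_one _)⟩, ?_⟩
  exact fun k => my_key k σ hP hG

lemma my_bad_not_real {σ : ℕ → ℕ∞} (hP : IsPierce σ) (hB : my_Bad σ) : ¬ Realizable σ := by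
  rintro ⟨x, -, hx⟩
  obtain ⟨n, hn2, hfin, htop, hcons⟩ := hB
  have hd : ∀ k, pd1 (pT^[k] x) = σ k := by
    intro k
    have := hx k
    simpa [pdig] using this
  -- the digit a at position n-2
  obtain ⟨a, ha'⟩ := WithTop.ne_top_iff_exists.mp (hfin (n - 2) (by omega))
  have ha : σ (n - 2) = (a : ℕ∞) := ha'.symm
  have ha1 : 1 ≤ a := by
    have := my_one_le hP (n - 2)
    rw [ha] at this
    exact_mod_cast this
  set y := pT^[n - 2] x with hy
  have h1 : pd1 y = (a : ℕ∞) := by rw [hd (n - 2), ha]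
  have hyne : y ≠ 0 := by
    intro h
    rw [pd1, if_pos h] at h1
    exact (ENat.coe_ne_top a) h1.symm
  have hyfl : ⌊y⁻¹⌋₊ = a := by
    rw [pd1, if_neg hyne] at h1
    exact_mod_cast h1
  obtain ⟨hy0, hygt, hyle⟩ := my_inv_floor ha1 hyfl
  -- position n-1 : digit a+1
  have hn1 : σ (n - 1) = ((a + 1 : ℕ) : ℕ∞) := by
    have e : n - 1 = n - 1 := rfl
    rw [← hcons, ha]
    push_cast
    ring
  set z := pT y with hz
  have hit1 : pT^[n - 1] x = z := by
    have e : n - 1 = (n - 2) + 1 := by omega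
    rw [e, Function.iterate_succ_apply', ← hy, hz]
  have h2 : pd1 z = ((a + 1 : ℕ) : ℕ∞) := by rw [← hit1, hd (n - 1), hn1]
  have hzne : z ≠ 0 := by
    intro h
    rw [pd1, if_pos h] at h2
    exact (ENat.coe_ne_top (a + 1)) h2.symm
  have hzfl : ⌊z⁻¹⌋₊ = a + 1 := by
    rw [pd1, if_neg hzne] at h2
    exact_mod_cast h2
  -- z = 1 - a y and z < (a+1)⁻¹
  have hzval : z = 1 - (a : ℝ) * y := by
    rw [hz, pT, if_neg hyne, hyfl]
  have hA : (0 : ℝ) < a := by exact_mod_cast ha1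
  have hzlt : z < ((a : ℝ) + 1)⁻¹ := by
    have hmul : (a : ℝ) * ((a : ℝ) + 1)⁻¹ < (a : ℝ) * y := by
      exact mul_lt_mul_of_pos_left hygt hA
    have hfs : (a : ℝ) * ((a : ℝ) + 1)⁻¹ = 1 - ((a : ℝ) + 1)⁻¹ := by
      field_simp
      ring
    rw [hzval]
    linarith [hfs ▸ hmul]
  -- position n : digit ⊤ forces pT z = 0, but pT z > 0. contradiction
  have hit2 : pT^[n] x = pT z := by
    have e : n = (n - 1) + 1 := by omega
    rw [e, Function.iterate_succ_apply', hit1]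
  have h3 : pd1 (pT z) = ⊤ := by rw [← hit2, hd n, htop n (le_refl n)]
  have hTz : pT z = 0 := by
    by_contra hc
    rw [pd1, if_neg hc] at h3
    exact (ENat.coe_ne_top _) h3
  have hTzval : pT z = 1 - ((a : ℝ) + 1) * z := by
    rw [pT, if_neg hzne, hzfl]
    push_cast
    ring
  have hmul2 : ((a : ℝ) + 1) * z < 1 := by
    have := mul_lt_mul_of_pos_left hzlt (show (0 : ℝ) < (a : ℝ) + 1 by linarith)
    rwa [mul_inv_cancel₀ (by linarith : (a : ℝ) + 1 ≠ 0)] at this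
  rw [hTzval] at hTz
  linarith

end Aux

theorem stmt5 (σ : ℕ → ℕ∞) (hP : IsPierce σ) :
    ¬ Realizable σ ↔
      ∃ n : ℕ, 2 ≤ n ∧ (∀ k < n, σ k ≠ ⊤) ∧ (∀ k, n ≤ k → σ k = ⊤) ∧
        σ (n - 2) + 1 = σ (n - 1) := by
  constructor
  · intro hnr
    by_contra hB
    exact hnr (my_good_realizable hP hB)
  · intro hB
    exact my_bad_not_real hP hB
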